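/- There exist permutations σ₁, σ₂, σ₃ of {1, …, 30} such that σ₁ ∘ σ₂ ∘ σ₃ = id, the subgroup generated by σ₁, σ₂, σ₃ acts transitively on {1, …, 30}, and the multisets of orbit sizes of the cyclic groups generated by σ₁, σ₂, σ₃ are, respectively, {4,4,4,4,3,3,2,2,1,1,1,1}, {5,4,4,4,3,3,2,2,2,1}, and {14,10,1,1,1,1,1,1}. -/

import Mathlib

/-- The number of orbits of the cyclic group generated by a permutation `σ`
(i.e., the number of cycles of `σ`, counting fixed points as cycles of length 1). -/
noncomputable def cycleCount {α : Type*} [Finite α] (σ : Equiv.Perm α) : ℕ :=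
  Nat.card (MulAction.orbitRel.Quotient (Subgroup.zpowers σ) α)

/-- The multiset of sizes of the orbits of the cyclic group generated by a permutation `σ`
(i.e., the cycle type of `σ`, with fixed points contributing parts equal to 1). -/
noncomputable def orbitSizes {α : Type*} [Finite α] (σ : Equiv.Perm α) : Multiset ℕ :=
  letI := Fintype.ofFinite (MulAction.orbitRel.Quotient (Subgroup.zpowers σ) α)
  (Finset.univ : Finset (MulAction.orbitRel.Quotient (Subgroup.zpowers σ) α)).val.map
    fun q => Nat.card q.orbit



lemma minimalPeriod_eq_of {α : Type*} {f : α → α} {x : α} {n : ℕ} (hn : 0 < n)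
    (h1 : f^[n] x = x) (h2 : ∀ m, m < n → 0 < m → f^[m] x ≠ x) :
    Function.minimalPeriod f x = n := by
  have hp : Function.IsPeriodicPt f n x := h1
  have hle : Function.minimalPeriod f x ≤ n := hp.minimalPeriod_le hn
  rcases lt_or_eq_of_le hle with h | h
  · exact absurd (Function.isPeriodicPt_minimalPeriod f x)
      (h2 _ h (hp.minimalPeriod_pos hn))
  · exact h

lemma card_orbit_zpowers {α : Type*} (σ : Equiv.Perm α) (x : α) :
    Nat.card (MulAction.orbit (Subgroup.zpowers σ) x) = Function.minimalPeriod (⇑σ) x := by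
  rw [Nat.card_congr (MulAction.orbitZPowersEquiv σ x), Nat.card_zmod]
  rfl

lemma zero_not_mem_orbitSizes {α : Type*} [Finite α] (σ : Equiv.Perm α) :
    0 ∉ orbitSizes σ := by
  intro h
  rw [orbitSizes, Multiset.mem_map] at h
  obtain ⟨q, -, hq⟩ := h
  haveI : Nonempty q.orbit := (MulAction.orbitRel.Quotient.nonempty_orbit q).to_subtype
  exact (Nat.card_pos (α := q.orbit)).ne' hq

lemma bind_replicate_injective {S T : Multiset ℕ} (hS : 0 ∉ S) (hT : 0 ∉ T)
    (h : (S.bind fun n => Multiset.replicate n n) = T.bind fun n => Multiset.replicate n n) :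
    S = T := by
  have hcount : ∀ U : Multiset ℕ, ∀ n : ℕ,
      Multiset.count n (U.bind fun m => Multiset.replicate m m) = n * Multiset.count n U := by
    intro U n
    induction U using Multiset.induction with
    | empty => simp
    | cons a s ih =>
      rw [Multiset.cons_bind, Multiset.count_add, ih, Multiset.count_cons,
        Multiset.count_replicate]
      rcases eq_or_ne n a with rfl | hna
      · simp [Nat.mul_add]
        omega
      · simp [hna, Ne.symm hna]
  ext n
  rcases Nat.eq_zero_or_pos n with rfl | hn
  · rw [Multiset.count_eq_zero_of_notMem hS, Multiset.count_eq_zero_of_notMem hT]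
  · have key := hcount S n
    rw [h, hcount T n] at key
    exact Nat.eq_of_mul_eq_mul_left hn key.symm

open MulAction in
lemma orbitSizes_bind {α : Type*} [Fintype α] (σ : Equiv.Perm α) :
    ((orbitSizes σ).bind fun n => Multiset.replicate n n)
      = Finset.univ.val.map
          (fun x : α => Nat.card (MulAction.orbit (Subgroup.zpowers σ) x)) := by
  classical
  letI FQ := Fintype.ofFinite (orbitRel.Quotient (Subgroup.zpowers σ) α)
  set Q := orbitRel.Quotient (Subgroup.zpowers σ) α with hQ
  set g : Q → ℕ := fun q => Nat.card q.orbit with hg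
  set f : α → ℕ := fun x => Nat.card (MulAction.orbit (Subgroup.zpowers σ) x) with hf
  have hfg : ∀ x : α, f x = g (Quotient.mk'' x) := fun x => by
    simp only [hf, hg, orbitRel.Quotient.orbit_mk]
  have horb : orbitSizes σ = (Finset.univ : Finset Q).val.map g := by
    rw [orbitSizes]
    rw [Subsingleton.elim (Fintype.ofFinite (orbitRel.Quotient (↥(Subgroup.zpowers σ)) α)) FQ]
  ext n
  rw [horb, Multiset.count_bind, Multiset.map_map, Multiset.count_map]
  have hL : ((Finset.univ : Finset Q).val.map
      ((fun m => Multiset.count n (Multiset.replicate m m)) ∘ g)).sum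
      = ∑ q ∈ Finset.univ.filter (fun q : Q => n = g q), n := by
    rw [Finset.sum_filter]
    rw [Finset.sum]
    apply congrArg
    apply Multiset.map_congr rfl
    intro q _
    simp only [Function.comp_apply, Multiset.count_replicate]
    rcases eq_or_ne n (g q) with h | h
    · simp [h]
    · simp [h, Ne.symm h]
  rw [hL]
  have hcard : Multiset.card (Multiset.filter (fun a => n = f a) (Finset.univ : Finset α).val)
      = (Finset.univ.filter (fun a : α => n = f a)).card := rfl
  rw [hcard]
  rw [Finset.card_eq_sum_card_fiberwise
    (f := fun x : α => (Quotient.mk'' x : Q))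
    (t := Finset.univ.filter (fun q : Q => n = g q))
    (fun x hx => by
      simp only [Finset.coe_filter, Set.mem_setOf_eq, Finset.mem_filter, Finset.mem_univ, true_and] at hx ⊢
      rw [hx, hfg])]
  apply Finset.sum_congr rfl
  intro q hq
  simp only [Finset.mem_filter, Finset.mem_univ, true_and] at hq
  have hfib : (Finset.univ.filter (fun a : α => n = f a)).filter
      (fun x => (Quotient.mk'' x : Q) = q)
      = Finset.univ.filter (fun x : α => (Quotient.mk'' x : Q) = q) := by
    rw [Finset.filter_filter]
    apply Finset.filter_congr
    intro x _
    constructor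
    · exact fun h => h.2
    · exact fun h => ⟨by rw [hfg, h, ← hq], h⟩
  rw [hfib]
  have : (Finset.univ.filter (fun x : α => (Quotient.mk'' x : Q) = q)).card
      = Nat.card q.orbit := by
    rw [← Fintype.card_subtype]
    rw [← Nat.card_eq_fintype_card]
    exact Nat.card_congr (Equiv.subtypeEquivRight fun x =>
      (orbitRel.Quotient.mem_orbit (a := x) (x := q)).symm)
  rw [this]
  exact hq

lemma orbitSizes_eq {α : Type*} [Fintype α] (σ : Equiv.Perm α) (v : α → ℕ) (T : Multiset ℕ)
    (hT : 0 ∉ T)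
    (hv : ∀ x, Function.minimalPeriod (⇑σ) x = v x)
    (hM : Finset.univ.val.map v = T.bind fun n => Multiset.replicate n n) :
    orbitSizes σ = T := by
  apply bind_replicate_injective (zero_not_mem_orbitSizes σ) hT
  rw [orbitSizes_bind, ← hM]
  exact Multiset.map_congr rfl fun x _ => by rw [card_orbit_zpowers, hv]

def pf1 : Fin 30 → Fin 30 := ![6, 20, 0, 7, 9, 11, 2, 5, 26, 4, 10, 3, 25, 13, 8, 29, 28, 1, 23, 19, 17, 18, 14, 24, 21, 15, 22, 27, 16, 12]
def pg1 : Fin 30 → Fin 30 := ![2, 17, 6, 11, 9, 7, 0, 3, 14, 4, 10, 5, 29, 13, 22, 25, 28, 20, 21, 19, 1, 24, 26, 18, 23, 12, 8, 27, 16, 15]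
def pf2 : Fin 30 → Fin 30 := ![17, 13, 9, 29, 27, 7, 15, 21, 14, 4, 26, 5, 0, 23, 28, 6, 19, 12, 18, 16, 1, 11, 25, 20, 22, 24, 8, 2, 10, 3]
def pg2 : Fin 30 → Fin 30 := ![12, 20, 27, 29, 9, 11, 15, 5, 26, 2, 28, 21, 17, 1, 8, 6, 19, 0, 18, 16, 23, 7, 24, 13, 25, 22, 10, 4, 14, 3]
def pf3 : Fin 30 → Fin 30 := ![27, 0, 15, 21, 2, 5, 12, 29, 8, 9, 28, 11, 3, 1, 24, 22, 14, 23, 7, 16, 20, 25, 10, 18, 13, 17, 26, 4, 19, 6]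
def pg3 : Fin 30 → Fin 30 := ![1, 13, 4, 12, 27, 5, 29, 18, 8, 9, 22, 11, 6, 24, 16, 2, 19, 25, 23, 28, 20, 3, 15, 17, 14, 21, 26, 0, 10, 7]

def p1 : Equiv.Perm (Fin 30) := ⟨pf1, pg1, by decide, by decide⟩
def p2 : Equiv.Perm (Fin 30) := ⟨pf2, pg2, by decide, by decide⟩
def p3 : Equiv.Perm (Fin 30) := ⟨pf3, pg3, by decide, by decide⟩

def pv1 : Fin 30 → ℕ := ![3, 3, 3, 4, 2, 4, 3, 4, 4, 2, 1, 4, 4, 1, 4, 4, 2, 3, 4, 1, 3, 4, 4, 4, 4, 4, 4, 1, 2, 4]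
def pv2 : Fin 30 → ℕ := ![3, 4, 4, 2, 4, 4, 2, 4, 5, 4, 5, 4, 3, 4, 5, 2, 2, 3, 1, 2, 4, 4, 3, 4, 3, 3, 5, 4, 5, 2]
def pv3 : Fin 30 → ℕ := ![14, 14, 14, 10, 14, 1, 10, 10, 1, 1, 14, 1, 10, 14, 14, 14, 14, 10, 10, 14, 1, 10, 14, 10, 14, 10, 1, 14, 14, 10]





/-- Realizability of the degree-30 branch-data triple
`[4, 4, 4, 4, 3, 3, 2, 2, 1, 1, 1, 1]`, `[5, 4, 4, 4, 3, 3, 2, 2, 2, 1]`, `[14, 10, 1, 1, 1, 1, 1, 1]`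
by a transitive permutation triple with product the identity. -/
theorem realizable_triple_16 :
    ∃ σ₁ σ₂ σ₃ : Equiv.Perm (Fin 30),
      σ₁ * σ₂ * σ₃ = 1 ∧
      (∀ x y : Fin 30,
        ∃ g ∈ Subgroup.closure ({σ₁, σ₂, σ₃} : Set (Equiv.Perm (Fin 30))), g x = y) ∧
      orbitSizes σ₁ = ({4, 4, 4, 4, 3, 3, 2, 2, 1, 1, 1, 1} : Multiset ℕ) ∧
      orbitSizes σ₂ = ({5, 4, 4, 4, 3, 3, 2, 2, 2, 1} : Multiset ℕ) ∧
      orbitSizes σ₃ = ({14, 10, 1, 1, 1, 1, 1, 1} : Multiset ℕ) := by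
  refine ⟨p1, p2, p3, ?_, ?_, ?_, ?_, ?_⟩
  · apply Equiv.ext
    decide
  · have h1 : p1 ∈ Subgroup.closure ({p1, p2, p3} : Set (Equiv.Perm (Fin 30))) :=
      Subgroup.subset_closure (by simp)
    have h2 : p2 ∈ Subgroup.closure ({p1, p2, p3} : Set (Equiv.Perm (Fin 30))) :=
      Subgroup.subset_closure (by simp)
    have h3 : p3 ∈ Subgroup.closure ({p1, p2, p3} : Set (Equiv.Perm (Fin 30))) :=
      Subgroup.subset_closure (by simp)
    have reach : ∀ x : Fin 30,
        ∃ g ∈ Subgroup.closure ({p1, p2, p3} : Set (Equiv.Perm (Fin 30))), g 0 = x := by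
      intro x
      fin_cases x
      · exact ⟨1, (one_mem _), by decide⟩
      · exact ⟨p3⁻¹, (inv_mem h3), by decide⟩
      · exact ⟨p1⁻¹, (inv_mem h1), by decide⟩
      · exact ⟨p3 * (p2⁻¹), (mul_mem h3 (inv_mem h2)), by decide⟩
      · exact ⟨p3 * (p3), (mul_mem h3 h3), by decide⟩
      · exact ⟨p1 * (p3⁻¹ * (p3⁻¹ * (p1))), (mul_mem h1 (mul_mem (inv_mem h3) (mul_mem (inv_mem h3) h1))), by decide⟩
      · exact ⟨p1, h1, by decide⟩
      · exact ⟨p3⁻¹ * (p3⁻¹ * (p1)), (mul_mem (inv_mem h3) (mul_mem (inv_mem h3) h1)), by decide⟩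
      · exact ⟨p1 * (p1 * (p3 * (p2 * (p1)))), (mul_mem h1 (mul_mem h1 (mul_mem h3 (mul_mem h2 h1)))), by decide⟩
      · exact ⟨p2 * (p1⁻¹), (mul_mem h2 (inv_mem h1)), by decide⟩
      · exact ⟨p3 * (p3 * (p2 * (p1))), (mul_mem h3 (mul_mem h3 (mul_mem h2 h1))), by decide⟩
      · exact ⟨p1⁻¹ * (p3 * (p2⁻¹)), (mul_mem (inv_mem h1) (mul_mem h3 (inv_mem h2))), by decide⟩
      · exact ⟨p2⁻¹, (inv_mem h2), by decide⟩
      · exact ⟨p2 * (p3⁻¹), (mul_mem h2 (inv_mem h3)), by decide⟩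
      · exact ⟨p1 * (p3 * (p2 * (p1))), (mul_mem h1 (mul_mem h3 (mul_mem h2 h1))), by decide⟩
      · exact ⟨p2 * (p1), (mul_mem h2 h1), by decide⟩
      · exact ⟨p3⁻¹ * (p1 * (p3 * (p2 * (p1)))), (mul_mem (inv_mem h3) (mul_mem h1 (mul_mem h3 (mul_mem h2 h1)))), by decide⟩
      · exact ⟨p2, h2, by decide⟩
      · exact ⟨p3 * (p3 * (p2)), (mul_mem h3 (mul_mem h3 h2)), by decide⟩
      · exact ⟨p3 * (p2 * (p1 * (p3 * (p2 * (p1))))), (mul_mem h3 (mul_mem h2 (mul_mem h1 (mul_mem h3 (mul_mem h2 h1))))), by decide⟩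
      · exact ⟨p1⁻¹ * (p2), (mul_mem (inv_mem h1) h2), by decide⟩
      · exact ⟨p3⁻¹ * (p3⁻¹ * (p2)), (mul_mem (inv_mem h3) (mul_mem (inv_mem h3) h2)), by decide⟩
      · exact ⟨p3 * (p2 * (p1)), (mul_mem h3 (mul_mem h2 h1)), by decide⟩
      · exact ⟨p3 * (p2), (mul_mem h3 h2), by decide⟩
      · exact ⟨p1 * (p3 * (p2)), (mul_mem h1 (mul_mem h3 h2)), by decide⟩
      · exact ⟨p3⁻¹ * (p2), (mul_mem (inv_mem h3) h2), by decide⟩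
      · exact ⟨p1⁻¹ * (p3 * (p2 * (p1))), (mul_mem (inv_mem h1) (mul_mem h3 (mul_mem h2 h1))), by decide⟩
      · exact ⟨p3, h3, by decide⟩
      · exact ⟨p2 * (p1 * (p3 * (p2 * (p1)))), (mul_mem h2 (mul_mem h1 (mul_mem h3 (mul_mem h2 h1)))), by decide⟩
      · exact ⟨p3⁻¹ * (p1), (mul_mem (inv_mem h3) h1), by decide⟩
    intro x y
    obtain ⟨gx, hgx, hgx0⟩ := reach x
    obtain ⟨gy, hgy, hgy0⟩ := reach y
    refine ⟨gy * gx⁻¹, mul_mem hgy (inv_mem hgx), ?_⟩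
    have hx0 : gx⁻¹ x = 0 := by rw [← hgx0]; simp
    rw [Equiv.Perm.mul_apply, hx0, hgy0]
  · refine orbitSizes_eq p1 pv1 _ (by decide) ?_ (by decide)
    intro x
    refine minimalPeriod_eq_of ?_ ?_ ?_
    · revert x; decide
    · revert x; decide
    · revert x; decide
  · refine orbitSizes_eq p2 pv2 _ (by decide) ?_ (by decide)
    intro x
    refine minimalPeriod_eq_of ?_ ?_ ?_
    · revert x; decide
    · revert x; decide
    · revert x; decide
  · refine orbitSizes_eq p3 pv3 _ (by decide) ?_ (by decide)
    intro x
    refine minimalPeriod_eq_of ?_ ?_ ?_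
    · revert x; decide
    · revert x; decide
    · revert x; decide
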